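/- arXiv:2301.12927 — 2 statements merged into one kernel-verified Lean document; each statement's English description precedes it below -/
import Mathlib

section
/- For real parameters a, b, c > 0 with c ≠ b and a < min(1, b+1, c+1), the Clausen hypergeometric series ₃F₂(a,b,c; b+1,c+1; 1) = Σ_{n=0}^∞ (a)_n (b)_n (c)_n / ((b+1)_n (c+1)_n n!) converges and equals (bc/(c−b))·Γ(1−a)·[Γ(b)/Γ(1−a+b) − Γ(c)/Γ(1−a+c)]. -/
open Real

noncomputable def poch (x : ℝ) (n : ℕ) : ℝ := (ascPochhammer ℝ n).eval x

lemma poch_zero (x : ℝ) : poch x 0 = 1 := by simp [poch]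

lemma poch_succ (x : ℝ) (n : ℕ) : poch x (n+1) = poch x n * (x + n) := by
  simp [poch, ascPochhammer_succ_right]

lemma poch_pos {x : ℝ} (hx : 0 < x) (n : ℕ) : 0 < poch x n := by
  induction n with
  | zero => simp [poch_zero]
  | succ n ih => rw [poch_succ]; positivity

lemma poch_shift (x : ℝ) (n : ℕ) : x * poch (x+1) n = poch x n * (x + n) := by
  induction n with
  | zero => simp [poch_zero]
  | succ n ih =>
    rw [poch_succ, poch_succ]
    push_cast
    calc x * (poch (x+1) n * (x + 1 + n)) = (x * poch (x+1) n) * (x + 1 + n) := by ring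
    _ = poch x n * (x + n) * (x + (n+1)) := by rw [ih]; ring

-- c_n ≤ 1 for 0 < a ≤ 1
lemma poch_div_factorial_le_one {a : ℝ} (ha : 0 < a) (ha1 : a ≤ 1) (n : ℕ) :
    poch a n / n.factorial ≤ 1 := by
  induction n with
  | zero => simp [poch_zero]
  | succ n ih =>
    rw [poch_succ, Nat.factorial_succ]
    push_cast
    have h1 : (0:ℝ) < n.factorial := by positivity
    have h2 : a + n ≤ n + 1 := by linarith
    have h3 : 0 < poch a n := poch_pos ha n
    rw [div_le_one (by positivity)]
    rw [div_le_one h1] at ih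
    nlinarith
open Set in

-- derivative of t ↦ (1-t)^p at y < 1
lemma hasDerivAt_one_sub_rpow {p y : ℝ} (hy : y < 1) :
    HasDerivAt (fun t : ℝ => (1 - t) ^ p) (-p * (1 - y) ^ (p - 1)) y := by
  have h0 : (1:ℝ) - y ≠ 0 := by linarith
  have h1 : HasDerivAt (fun t : ℝ => 1 - t) (-1) y := by
    simpa using (hasDerivAt_id y).const_sub 1
  have := (Real.hasDerivAt_rpow_const (x := 1 - y) (p := p) (Or.inl h0)).comp y h1
  refine this.congr_deriv ?_
  ring

lemma contDiffAt_one_sub_rpow {p y : ℝ} (hy : y < 1) (n : ℕ∞) :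
    ContDiffAt ℝ n (fun t : ℝ => (1 - t) ^ p) y := by
  have h0 : (1:ℝ) - y ≠ 0 := by linarith
  have h1 : ContDiffAt ℝ n (fun t : ℝ => 1 - t) y := contDiffAt_const.sub contDiffAt_id
  exact h1.rpow_const_of_ne h0

open Set in
lemma iteratedDerivWithin_one_sub_rpow {a x : ℝ} (hx0 : 0 < x) (hx1 : x < 1) (n : ℕ) :
    ∀ y ∈ Icc (0:ℝ) x, iteratedDerivWithin n (fun t : ℝ => (1 - t) ^ (-a)) (Icc 0 x) y
      = poch a n * (1 - y) ^ (-a - n) := by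
  induction n with
  | zero =>
    intro y hy
    simp [poch_zero]
  | succ n ih =>
    intro y hy
    have hy1 : y < 1 := lt_of_le_of_lt hy.2 hx1
    have hud : UniqueDiffWithinAt ℝ (Icc (0:ℝ) x) y := (uniqueDiffOn_Icc hx0) y hy
    rw [iteratedDerivWithin_succ]
    rw [derivWithin_congr ih (ih y hy)]
    have hd : HasDerivAt (fun t : ℝ => poch a n * (1 - t) ^ (-a - n))
        (poch a n * (-(-a - n) * (1 - y) ^ (-a - n - 1))) y :=
      (hasDerivAt_one_sub_rpow hy1).const_mul _
    rw [hd.hasDerivWithinAt.derivWithin hud]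
    rw [poch_succ]
    push_cast
    rw [show -a - (n:ℝ) - 1 = -a - ((n:ℝ) + 1) by ring]
    ring

open Set Filter Topology in
lemma hasSum_binomial {a x : ℝ} (ha : 0 < a) (ha1 : a < 1) (hx0 : 0 < x) (hx1 : x < 1) :
    HasSum (fun n : ℕ => poch a n / n.factorial * x ^ n) ((1 - x) ^ (-a)) := by
  have hnonneg : ∀ n : ℕ, 0 ≤ poch a n / n.factorial * x ^ n := by
    intro n
    have := poch_pos ha n
    positivity
  rw [hasSum_iff_tendsto_nat_of_nonneg hnonneg]
  rw [← tendsto_add_atTop_iff_nat 1]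
  -- remainder bound
  have key : ∀ N : ℕ, |∑ k ∈ Finset.range (N + 1), poch a k / k.factorial * x ^ k
      - (1 - x) ^ (-a)| ≤ ((N:ℝ) * x ^ N + x ^ N) * (x * (1 - x) ^ (-a - 1)) := by
    intro N
    have hf : ContDiffOn ℝ N (fun t : ℝ => (1 - t) ^ (-a)) (Icc 0 x) := fun y hy =>
      (contDiffAt_one_sub_rpow (lt_of_le_of_lt hy.2 hx1) N).contDiffWithinAt
    have hf' : DifferentiableOn ℝ
        (iteratedDerivWithin N (fun t : ℝ => (1 - t) ^ (-a)) (Icc 0 x)) (Ioo 0 x) := by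
      apply DifferentiableOn.congr (f := fun y => poch a N * (1 - y) ^ (-a - N))
      · intro y hy
        have hy1 : y < 1 := lt_of_lt_of_le hy.2 hx1.le
        exact (((hasDerivAt_one_sub_rpow hy1).const_mul
          (poch a N)).differentiableAt).differentiableWithinAt
      · intro y hy
        exact iteratedDerivWithin_one_sub_rpow hx0 hx1 N y (Ioo_subset_Icc_self hy)
    have huI : uIcc (0:ℝ) x = Icc 0 x := uIcc_of_le hx0.le
    have huIoo : uIoo (0:ℝ) x = Ioo 0 x := uIoo_of_le hx0.le
    obtain ⟨x', hx', hrem⟩ := taylor_mean_remainder_cauchy hx0.ne (by rwa [huI]) (by rwa [huI, huIoo])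
    rw [huIoo] at hx'
    rw [huI] at hrem
    have htay : taylorWithinEval (fun t : ℝ => (1 - t) ^ (-a)) N (Icc 0 x) 0 x
        = ∑ k ∈ Finset.range (N + 1), poch a k / k.factorial * x ^ k := by
      rw [taylor_within_apply]
      apply Finset.sum_congr rfl
      intro k hk
      rw [iteratedDerivWithin_one_sub_rpow hx0 hx1 k 0 (left_mem_Icc.2 hx0.le)]
      rw [sub_zero, sub_zero, Real.one_rpow, smul_eq_mul]
      ring
    rw [htay] at hrem
    rw [abs_sub_comm, hrem]
    -- x' ∈ Ioo 0 x
    have h1x' : 0 < 1 - x' := by nlinarith [hx'.2, hx1]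
    have hiter : iteratedDerivWithin (N+1) (fun t : ℝ => (1 - t) ^ (-a)) (Icc 0 x) x'
        = poch a (N+1) * (1 - x') ^ (-a - (N+1:ℕ)) :=
      iteratedDerivWithin_one_sub_rpow hx0 hx1 (N+1) x' (Ioo_subset_Icc_self hx')
    rw [hiter, sub_zero]
    have hxx' : 0 ≤ x - x' := by linarith [hx'.2]
    have hpoch : 0 < poch a (N+1) := poch_pos ha (N+1)
    -- rearrange: (1-x')^(-a-(N+1)) = (1-x')^(-a-1) * ((1-x')⁻¹)^N
    have hsplit : (1 - x') ^ (-a - ((N:ℝ)+1)) = (1 - x') ^ (-a - 1) * ((1 - x') ^ N)⁻¹ := by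
      rw [show -a - ((N:ℝ)+1) = (-a - 1) + (-(N:ℝ)) by ring, Real.rpow_add h1x',
        Real.rpow_neg h1x'.le, Real.rpow_natCast]
    have key1 : (x - x') ^ N * ((1 - x') ^ N)⁻¹ ≤ x ^ N := by
      have hq : (x - x') / (1 - x') ≤ x := by
        rw [div_le_iff₀ h1x']
        nlinarith [hx'.1, hx1.le]
      calc (x - x') ^ N * ((1 - x') ^ N)⁻¹ = ((x - x') / (1 - x')) ^ N := by
            rw [div_pow, div_eq_mul_inv]
        _ ≤ x ^ N := pow_le_pow_left₀ (by positivity) hq N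
    have key2 : (1 - x') ^ (-a - 1) ≤ (1 - x) ^ (-a - 1) := by
      apply Real.rpow_le_rpow_of_nonpos (by linarith) (by linarith [hx'.2]) (by linarith)
    have hc : poch a (N+1) / N.factorial ≤ (N:ℝ) + 1 := by
      have h := poch_div_factorial_le_one ha ha1.le N
      rw [poch_succ]
      have hfac : (0:ℝ) < N.factorial := by positivity
      rw [div_le_iff₀ hfac] at h ⊢
      have : 0 < poch a N := poch_pos ha N
      nlinarith
    rw [abs_of_nonneg (by positivity)]
    push_cast
    calc poch a (N+1) * (1 - x') ^ (-a - ((N:ℝ)+1)) * (x - x') ^ N / N.factorial * x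
        = (poch a (N+1) / N.factorial) * ((x - x') ^ N * ((1 - x') ^ N)⁻¹)
          * ((1 - x') ^ (-a - 1)) * x := by rw [hsplit]; ring
      _ ≤ ((N:ℝ)+1) * x ^ N * ((1 - x) ^ (-a - 1)) * x := by
          apply mul_le_mul_of_nonneg_right _ hx0.le
          apply mul_le_mul _ key2 (by positivity) (by positivity)
          apply mul_le_mul hc key1 (by positivity) (by positivity)
      _ = ((N:ℝ) * x ^ N + x ^ N) * (x * (1 - x) ^ (-a - 1)) := by ring
  -- conclude by squeeze
  have hlim : Tendsto (fun N : ℕ => ((N:ℝ) * x ^ N + x ^ N) * (x * (1 - x) ^ (-a - 1)))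
      atTop (𝓝 0) := by
    have h1 := tendsto_self_mul_const_pow_of_lt_one hx0.le hx1
    have h2 := tendsto_pow_atTop_nhds_zero_of_lt_one hx0.le hx1
    simpa using ((h1.add h2).mul_const (x * (1 - x) ^ (-a - 1)))
  rw [← tendsto_sub_nhds_zero_iff]
  exact squeeze_zero_norm (fun N => by simpa using key N) hlim

open Set MeasureTheory intervalIntegral in
lemma realBeta {u v : ℝ} (hu : 0 < u) (hv : 0 < v) :
    IntegrableOn (fun x : ℝ => x ^ (u-1) * (1-x) ^ (v-1)) (Ioo 0 1) volume ∧
    ∫ x in Ioo (0:ℝ) 1, x ^ (u-1) * (1-x) ^ (v-1)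
      = Real.Gamma u * Real.Gamma v / Real.Gamma (u+v) := by
  have hcu : 0 < (u:ℂ).re := by simpa using hu
  have hcv : 0 < (v:ℂ).re := by simpa using hv
  have heq : EqOn (fun x : ℝ => (x:ℂ) ^ ((u:ℂ)-1) * ((1:ℂ)-x) ^ ((v:ℂ)-1))
      (fun x : ℝ => ((x ^ (u-1) * (1-x) ^ (v-1) : ℝ) : ℂ)) (Icc 0 1) := by
    intro x hx
    have h1 : ((1:ℂ) - (x:ℂ)) = (((1 - x : ℝ)) : ℂ) := by push_cast; ring
    have h2 : ((u:ℂ) - 1) = (((u - 1 : ℝ)) : ℂ) := by push_cast; ring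
    have h3 : ((v:ℂ) - 1) = (((v - 1 : ℝ)) : ℂ) := by push_cast; ring
    simp only [h1, h2, h3]
    rw [← Complex.ofReal_cpow hx.1, ← Complex.ofReal_cpow (by linarith [hx.2] : (0:ℝ) ≤ 1 - x)]
    push_cast
    ring
  have hconv := Complex.betaIntegral_convergent hcu hcv
  have huIcc : uIcc (0:ℝ) 1 = Icc 0 1 := uIcc_of_le zero_le_one
  -- integrability of the real integrand
  have hint : IntegrableOn (fun x : ℝ => x ^ (u-1) * (1-x) ^ (v-1)) (Ioo 0 1) volume := by
    have h1 : IntegrableOn (fun x : ℝ => (x:ℂ) ^ ((u:ℂ)-1) * ((1:ℂ)-x) ^ ((v:ℂ)-1))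
        (Ioc 0 1) volume := by
      rw [← intervalIntegrable_iff_integrableOn_Ioc_of_le zero_le_one]
      exact hconv
    have h2 : IntegrableOn (fun x : ℝ => ((x ^ (u-1) * (1-x) ^ (v-1) : ℝ) : ℂ))
        (Ioc 0 1) volume :=
      h1.congr_fun (fun x hx => heq (Ioc_subset_Icc_self hx)) measurableSet_Ioc
    have h3 : IntegrableOn (fun x : ℝ => ((x ^ (u-1) * (1-x) ^ (v-1) : ℝ) : ℂ).re)
        (Ioc 0 1) volume := h2.re
    have h4 := h3.mono_set Ioo_subset_Ioc_self
    simpa using h4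
  refine ⟨hint, ?_⟩
  -- value
  have hbeta : Complex.betaIntegral u v
      = ((∫ x in Ioo (0:ℝ) 1, x ^ (u-1) * (1-x) ^ (v-1) : ℝ) : ℂ) := by
    rw [Complex.betaIntegral]
    rw [intervalIntegral.integral_congr (g := fun x : ℝ => ((x ^ (u-1) * (1-x) ^ (v-1) : ℝ) : ℂ))
      (by rwa [huIcc])]
    rw [intervalIntegral.integral_ofReal]
    rw [intervalIntegral.integral_of_le zero_le_one, integral_Ioc_eq_integral_Ioo]
  have hg := Complex.Gamma_mul_Gamma_eq_betaIntegral hcu hcv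
  rw [hbeta] at hg
  have hcast : ((u:ℂ) + (v:ℂ)) = ((u + v : ℝ) : ℂ) := by push_cast; ring
  rw [hcast, Complex.Gamma_ofReal, Complex.Gamma_ofReal, Complex.Gamma_ofReal] at hg
  have hg' : Real.Gamma u * Real.Gamma v
      = Real.Gamma (u+v) * ∫ x in Ioo (0:ℝ) 1, x ^ (u-1) * (1-x) ^ (v-1) := by
    exact_mod_cast hg
  have hG : Real.Gamma (u+v) ≠ 0 := (Real.Gamma_pos_of_pos (by linarith)).ne'
  field_simp [hG] at hg' ⊢
  linarith [hg']

open Set MeasureTheory Filter Topology in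
lemma key_hasSum {a u : ℝ} (ha : 0 < a) (ha1 : a < 1) (hu : 0 < u) :
    HasSum (fun n : ℕ => poch a n / n.factorial * (1 / (u + n)))
      (Real.Gamma u * Real.Gamma (1-a) / Real.Gamma (u + (1-a))) := by
  obtain ⟨hint, hval⟩ := realBeta hu (by linarith : (0:ℝ) < 1 - a)
  set B : ℝ := ∫ x in Ioo (0:ℝ) 1, x ^ (u-1) * (1-x) ^ ((1-a)-1) with hB
  set g : ℕ → ℝ := fun n => poch a n / n.factorial * (1 / (u + n)) with hg
  have hun : ∀ n : ℕ, (0:ℝ) < u + n := fun n => by positivity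
  have hgnonneg : ∀ n, 0 ≤ g n := by
    intro n
    have h1 := poch_pos ha n
    have h2 := hun n
    positivity
  set f : ℕ → ℝ → ℝ := fun n x => poch a n / n.factorial * x ^ (u - 1 + n) with hf
  have hfnonneg : ∀ n : ℕ, ∀ x : ℝ, 0 ≤ x → 0 ≤ f n x := by
    intro n x hx
    have h1 := poch_pos ha n
    have h2 := Real.rpow_nonneg hx (u - 1 + n)
    positivity
  have hmeas : ∀ n : ℕ, Measurable (fun x : ℝ => ENNReal.ofReal (f n x)) := by
    intro n
    apply Measurable.ennreal_ofReal
    exact (measurable_id'.pow_const (u - 1 + n)).const_mul _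
  have tonelli := lintegral_tsum (μ := volume.restrict (Ioo (0:ℝ) 1))
    (f := fun n x => ENNReal.ofReal (f n x)) (fun n => (hmeas n).aemeasurable)
  -- pointwise identification of the inner sum
  have hpt : ∀ x ∈ Ioo (0:ℝ) 1,
      (∑' n : ℕ, ENNReal.ofReal (f n x)) = ENNReal.ofReal (x ^ (u-1) * (1-x) ^ ((1-a)-1)) := by
    intro x hx
    have hx0 : (0:ℝ) < x := hx.1
    have hx1 : x < 1 := hx.2
    have hbin := (hasSum_binomial ha ha1 hx0 hx1).mul_left (x ^ (u-1))
    have hfx : (fun n : ℕ => x ^ (u-1) * (poch a n / n.factorial * x ^ n)) = fun n => f n x := by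
      funext n
      rw [hf]
      simp only
      rw [Real.rpow_add hx0, Real.rpow_natCast]
      ring
    rw [hfx] at hbin
    rw [← ENNReal.ofReal_tsum_of_nonneg (fun n => hfnonneg n x hx0.le) hbin.summable,
      hbin.tsum_eq]
    congr 1
    rw [show (1-a) - 1 = -a by ring]
  -- left side is the Beta integral
  have hL : (∫⁻ x in Ioo (0:ℝ) 1, ∑' n : ℕ, ENNReal.ofReal (f n x)) = ENNReal.ofReal B := by
    rw [setLIntegral_congr_fun measurableSet_Ioo hpt]
    rw [← ofReal_integral_eq_lintegral_ofReal hint]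
    filter_upwards [ae_restrict_mem measurableSet_Ioo] with x hx
    exact mul_nonneg (Real.rpow_nonneg hx.1.le _) (Real.rpow_nonneg (by linarith [hx.2]) _)
  -- right side: each integral
  have hR : ∀ n : ℕ, (∫⁻ x in Ioo (0:ℝ) 1, ENNReal.ofReal (f n x)) = ENNReal.ofReal (g n) := by
    intro n
    have hr : (-1:ℝ) < u - 1 + n := by have := hun n; linarith
    have hi : IntegrableOn (fun x : ℝ => x ^ (u - 1 + n)) (Ioo 0 1) volume := by
      have h1 := intervalIntegral.intervalIntegrable_rpow' (a := (0:ℝ)) (b := 1) hr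
      rw [intervalIntegrable_iff_integrableOn_Ioc_of_le zero_le_one] at h1
      exact h1.mono_set Ioo_subset_Ioc_self
    have hvaln : (∫ x in Ioo (0:ℝ) 1, x ^ (u - 1 + n)) = 1 / (u + n) := by
      rw [← integral_Ioc_eq_integral_Ioo, ← intervalIntegral.integral_of_le zero_le_one,
        integral_rpow (Or.inl hr)]
      rw [Real.one_rpow, Real.zero_rpow (by have := hun n; intro h; apply this.ne'; linarith)]
      rw [show u - 1 + n + 1 = u + n by ring]
      ring
    have hnn : 0 ≤ᵐ[volume.restrict (Ioo (0:ℝ) 1)] fun x => f n x := by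
      filter_upwards [ae_restrict_mem measurableSet_Ioo] with x hx
      exact hfnonneg n x hx.1.le
    rw [← ofReal_integral_eq_lintegral_ofReal ((hi.const_mul _)) hnn]
    congr 1
    show (∫ x in Ioo (0:ℝ) 1, poch a n / n.factorial * x ^ (u - 1 + n))
      = poch a n / n.factorial * (1 / (u + n))
    rw [MeasureTheory.integral_const_mul, hvaln]
  -- assemble
  have hsum : (∑' n : ℕ, ENNReal.ofReal (g n)) = ENNReal.ofReal B := by
    rw [← tsum_congr hR, ← tonelli, hL]
  have hBpos : 0 < B := by
    rw [hval]
    exact div_pos (mul_pos (Real.Gamma_pos_of_pos hu) (Real.Gamma_pos_of_pos (by linarith)))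
      (Real.Gamma_pos_of_pos (by linarith))
  have hne : (∑' n : ℕ, ENNReal.ofReal (g n)) ≠ ⊤ := by
    rw [hsum]; exact ENNReal.ofReal_ne_top
  have hsummable : Summable g :=
    (ENNReal.summable_toReal hne).congr (fun n => ENNReal.toReal_ofReal (hgnonneg n))
  have htsum : ∑' n, g n = B := by
    have h2 := ENNReal.tsum_toReal_eq (f := fun n => ENNReal.ofReal (g n))
      (fun n => ENNReal.ofReal_ne_top)
    rw [hsum, ENNReal.toReal_ofReal hBpos.le] at h2
    rw [h2]
    exact (tsum_congr (fun n => (ENNReal.toReal_ofReal (hgnonneg n)).symm))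
  rw [← hval]
  exact htsum ▸ hsummable.hasSum

theorem clausen_3F2_unit (a b c : ℝ) (ha : 0 < a) (hb : 0 < b) (hc : 0 < c)
    (hbc : c ≠ b) (ha1 : a < 1) (hab : a < b + 1) (hac : a < c + 1) :
    HasSum (fun n : ℕ =>
        poch a n * poch b n * poch c n /
          (poch (b + 1) n * poch (c + 1) n * (n.factorial : ℝ)))
      (b * c / (c - b) * Real.Gamma (1 - a) *
        (Real.Gamma b / Real.Gamma (1 - a + b) - Real.Gamma c / Real.Gamma (1 - a + c))) := by
  have H := ((key_hasSum ha ha1 hb).sub (key_hasSum ha ha1 hc)).mul_left (b * c / (c - b))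
  have hfun : (fun n : ℕ => b * c / (c - b) *
        (poch a n / n.factorial * (1 / (b + n)) - poch a n / n.factorial * (1 / (c + n))))
      = (fun n : ℕ => poch a n * poch b n * poch c n /
          (poch (b + 1) n * poch (c + 1) n * (n.factorial : ℝ))) := by
    funext n
    have hbn : (0:ℝ) < b + n := by positivity
    have hcn : (0:ℝ) < c + n := by positivity
    have h1 := poch_shift b n
    have h2 := poch_shift c n
    have hpb := poch_pos (by linarith : (0:ℝ) < b + 1) n
    have hpc := poch_pos (by linarith : (0:ℝ) < c + 1) n
    have hfac : (0:ℝ) < (n.factorial : ℝ) := by positivity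
    have hcb : c - b ≠ 0 := sub_ne_zero.mpr hbc
    have e1 : poch b n = b * poch (b + 1) n / (b + n) := by
      field_simp
      linarith [h1]
    have e2 : poch c n = c * poch (c + 1) n / (c + n) := by
      field_simp
      linarith [h2]
    rw [e1, e2]
    field_simp
    ring
  rw [hfun] at H
  refine (congrArg (HasSum _) ?_).mpr H
  rw [show b + (1 - a) = 1 - a + b by ring, show c + (1 - a) = 1 - a + c by ring]
  ring
end

section
/- Let b, c > 0 with b ≠ c and let 0 < a < 1 with a < min(b+1, c+1). Then the function G(x) = Γ(x)/Γ(1−a+x) on (0,∞) satisfies: the ₃F₂ evaluation ₃F₂(a,b,c;b+1,c+1;1) = (bc/(c−b))·Γ(1−a)·(G(b) − G(c)) is positive. -/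
open Real MeasureTheory intervalIntegral Set Function

noncomputable def rbeta (x s : ℝ) : ℝ :=
  ∫ t : ℝ in (0:ℝ)..1, t ^ (x - 1) * (1 - t) ^ (s - 1)

lemma cbeta_eq (x s : ℝ) :
    Complex.betaIntegral (x : ℂ) (s : ℂ) = ((rbeta x s : ℝ) : ℂ) := by
  rw [Complex.betaIntegral, rbeta, ← intervalIntegral.integral_ofReal]
  refine intervalIntegral.integral_congr (fun t ht => ?_)
  rw [uIcc_of_le zero_le_one] at ht
  push_cast
  rw [Complex.ofReal_cpow ht.1, Complex.ofReal_cpow (by linarith [ht.2])]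
  push_cast
  ring

lemma rbeta_integrable {x s : ℝ} (hx : 0 < x) (hs : 0 < s) :
    IntervalIntegrable (fun t : ℝ => t ^ (x - 1) * (1 - t) ^ (s - 1)) volume 0 1 := by
  have h := Complex.betaIntegral_convergent (u := (x:ℂ)) (v := (s:ℂ))
    (by simpa using hx) (by simpa using hs)
  have h2 : IntervalIntegrable
      (fun t : ℝ => ((t:ℂ) ^ ((x:ℂ) - 1) * (1 - (t:ℂ)) ^ ((s:ℂ) - 1)).re) volume 0 1 := by
    constructor
    · exact (h.1).re
    · exact (h.2).re
  constructor
  · refine (h2.1.congr_fun (fun t ht => ?_) measurableSet_Ioc)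
    have h0 : (0:ℝ) ≤ t := ht.1.le
    have h1 : (0:ℝ) ≤ 1 - t := by linarith [ht.2]
    have e1 : ((x:ℂ) - 1) = ((x - 1 : ℝ) : ℂ) := by push_cast; ring
    have e2 : ((s:ℂ) - 1) = ((s - 1 : ℝ) : ℂ) := by push_cast; ring
    have e3 : (1 - (t:ℂ)) = ((1 - t : ℝ) : ℂ) := by push_cast; ring
    dsimp only
    rw [e1, e2, e3, ← Complex.ofReal_cpow h0, ← Complex.ofReal_cpow h1, ← Complex.ofReal_mul,
      Complex.ofReal_re]
  · rw [Ioc_eq_empty (by norm_num)]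
    exact integrableOn_empty

lemma Gamma_mul_rbeta {x s : ℝ} (hx : 0 < x) (hs : 0 < s) :
    Real.Gamma x * Real.Gamma s = Real.Gamma (x + s) * rbeta x s := by
  have := Complex.Gamma_mul_Gamma_eq_betaIntegral (s := (x:ℂ)) (t := (s:ℂ))
    (by simpa using hx) (by simpa using hs)
  rw [cbeta_eq] at this
  have h2 : ((Real.Gamma x * Real.Gamma s : ℝ) : ℂ)
      = ((Real.Gamma (x + s) * rbeta x s : ℝ) : ℂ) := by
    push_cast
    rw [← Complex.Gamma_ofReal, ← Complex.Gamma_ofReal, ← Complex.Gamma_ofReal]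
    push_cast at this ⊢
    exact this
  exact_mod_cast h2

lemma rbeta_strict {x y s : ℝ} (hx : 0 < x) (hxy : x < y) (hs : 0 < s) :
    rbeta y s < rbeta x s := by
  have hy : 0 < y := hx.trans hxy
  have hix := rbeta_integrable hx hs
  have hiy := rbeta_integrable hy hs
  have hpos : 0 < ∫ t in (0:ℝ)..1,
      (t ^ (x - 1) * (1 - t) ^ (s - 1) - t ^ (y - 1) * (1 - t) ^ (s - 1)) := by
    refine intervalIntegral_pos_of_pos_on (hix.sub hiy) (fun t ht => ?_) one_pos
    have h1 : (0:ℝ) < 1 - t := by linarith [ht.2]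
    have h2 : t ^ (y - 1) < t ^ (x - 1) :=
      Real.rpow_lt_rpow_of_exponent_gt ht.1 ht.2 (by linarith)
    have h3 : (0:ℝ) < (1 - t) ^ (s - 1) := Real.rpow_pos_of_pos h1 _
    nlinarith
  rw [intervalIntegral.integral_sub hix hiy] at hpos
  rw [rbeta, rbeta]
  linarith

lemma Gamma_ratio_lt {x y s : ℝ} (hx : 0 < x) (hxy : x < y) (hs : 0 < s) :
    Real.Gamma y / Real.Gamma (y + s) < Real.Gamma x / Real.Gamma (x + s) := by
  have hy : 0 < y := hx.trans hxy
  have hGxs := Real.Gamma_pos_of_pos (by linarith : 0 < x + s)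
  have hGys := Real.Gamma_pos_of_pos (by linarith : 0 < y + s)
  have hGs := Real.Gamma_pos_of_pos hs
  have h1 := Gamma_mul_rbeta hx hs
  have h2 := Gamma_mul_rbeta hy hs
  have hlt := rbeta_strict hx hxy hs
  rw [div_lt_div_iff₀ hGys hGxs]
  nlinarith [mul_pos (mul_pos hGys hGxs) (sub_pos.mpr hlt)]

theorem clausen_value_pos (a b c : ℝ) (hb : 0 < b) (hc : 0 < c) (hbc : b ≠ c)
    (ha0 : 0 < a) (ha1 : a < 1) (hab : a < b + 1) (hac : a < c + 1) :
    0 < b * c / (c - b) * Real.Gamma (1 - a) *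
        (Real.Gamma b / Real.Gamma (1 - a + b) - Real.Gamma c / Real.Gamma (1 - a + c)) := by
  have hs : 0 < 1 - a := by linarith
  have hG := Real.Gamma_pos_of_pos hs
  have eb : 1 - a + b = b + (1 - a) := by ring
  have ec : 1 - a + c = c + (1 - a) := by ring
  rw [eb, ec]
  rcases hbc.lt_or_gt with h | h
  · have hd := Gamma_ratio_lt hb h hs
    have h1 : 0 < b * c / (c - b) := div_pos (mul_pos hb hc) (by linarith)
    exact mul_pos (mul_pos h1 hG) (sub_pos.mpr hd)
  · have hd := Gamma_ratio_lt hc h hs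
    have h1 : b * c / (c - b) < 0 :=
      div_neg_of_pos_of_neg (mul_pos hb hc) (by linarith)
    exact mul_pos_of_neg_of_neg (mul_neg_of_neg_of_pos h1 hG) (by linarith)
end
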